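/- In addition to the assumptions of the previous statement, suppose |Y| is bounded: Y_i ≤ c for all i for some finite c ≥ 0. Then Ri(ℋ_x) = ⋃_{r ∈ ℚ, r>0} ℋ_x^r. -/

import Mathlib

open Set MeasureTheory Metric

/-- If additionally `Y` is bounded above componentwise (`Y_i ≤ c`), then
`Ri(ℋ_x) = ⋃_{r ∈ ℚ, r>0} ℋ_x^r`. -/
theorem ri_eq_union_Hxr_of_bounded
    {d : ℕ} {Ω : Type*} [MeasurableSpace Ω]
    (Y : Ω → EuclideanSpace ℝ (Fin d)) (hY : Measurable Y)
    (b : ℝ) (hb : 0 < b) (hYb : ∀ ω, ∀ i : Fin d, -b ≤ Y ω i)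
    (c : ℝ) (hc : 0 ≤ c) (hYc : ∀ ω, ∀ i : Fin d, Y ω i ≤ c)
    (𝒬 : Set (Measure Ω)) (h𝒬ne : 𝒬.Nonempty)
    (h𝒬prob : ∀ P ∈ 𝒬, IsProbabilityMeasure P)
    (x : ℝ) (hx : 0 < x) :
    intrinsicInterior ℝ {h : EuclideanSpace ℝ (Fin d) |
        ∀ P ∈ 𝒬, P {ω | 0 ≤ x + (inner ℝ h (Y ω) : ℝ)} = 1} =
      ⋃ r ∈ {q : ℚ | 0 < q}, {h : EuclideanSpace ℝ (Fin d) |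
        ∀ P ∈ 𝒬, P {ω | (r : ℝ) ≤ x + (inner ℝ h (Y ω) : ℝ)} = 1} := by
  classical
  set H : Set (EuclideanSpace ℝ (Fin d)) :=
    {h | ∀ P ∈ 𝒬, P {ω | 0 ≤ x + (inner ℝ h (Y ω) : ℝ)} = 1} with hHdef
  set M : ℝ := max b c with hMdef
  have hM0 : 0 ≤ M := le_trans hc (le_max_right b c)
  set K : ℝ := Real.sqrt d * M with hKdef
  have hK0 : 0 ≤ K := mul_nonneg (Real.sqrt_nonneg _) hM0
  -- norm bound on Y
  have hYn : ∀ ω, ‖Y ω‖ ≤ K := by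
    intro ω
    rw [EuclideanSpace.norm_eq]
    have h1 : ∀ i : Fin d, ‖Y ω i‖ ≤ M := by
      intro i
      rw [Real.norm_eq_abs, abs_le]
      constructor
      · have := hYb ω i
        have hbM : b ≤ M := le_max_left b c
        linarith
      · exact le_trans (hYc ω i) (le_max_right b c)
    have h2 : (∑ i : Fin d, ‖Y ω i‖ ^ 2) ≤ (d : ℝ) * M ^ 2 := by
      calc (∑ i : Fin d, ‖Y ω i‖ ^ 2) ≤ ∑ _i : Fin d, M ^ 2 :=
            Finset.sum_le_sum fun i _ => pow_le_pow_left₀ (norm_nonneg _) (h1 i) 2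
        _ = (d : ℝ) * M ^ 2 := by
            simp [Finset.sum_const, nsmul_eq_mul]
    calc Real.sqrt (∑ i : Fin d, ‖Y ω i‖ ^ 2) ≤ Real.sqrt ((d : ℝ) * M ^ 2) :=
          Real.sqrt_le_sqrt h2
      _ = K := by
          rw [hKdef, Real.sqrt_mul (by positivity), Real.sqrt_sq hM0]
  -- 0 ∈ H
  have h0H : (0 : EuclideanSpace ℝ (Fin d)) ∈ H := by
    intro P hP
    haveI := h𝒬prob P hP
    have : {ω | 0 ≤ x + (inner ℝ (0 : EuclideanSpace ℝ (Fin d)) (Y ω) : ℝ)} = univ := by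
      apply eq_univ_of_forall
      intro ω
      simp only [inner_zero_left, mem_setOf_eq, add_zero]
      exact le_of_lt hx
    rw [this, measure_univ]
  ext h
  constructor
  · intro hh
    have hH : h ∈ H := intrinsicInterior_subset hh
    obtain ⟨y, hyU, hyx⟩ := mem_intrinsicInterior.mp hh
    -- (1+t) • h is in the affine span of H for all t
    have memspan : ∀ t : ℝ, (1 + t) • h ∈ affineSpan ℝ H := by
      intro t
      have hmem := AffineSubspace.smul_vsub_vadd_mem (affineSpan ℝ H) t
        (subset_affineSpan ℝ H hH) (subset_affineSpan ℝ H h0H) (subset_affineSpan ℝ H hH)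
      have e : (1 + t) • h
          = t • (h -ᵥ (0 : EuclideanSpace ℝ (Fin d))) +ᵥ h := by
        rw [vsub_eq_sub, sub_zero, vadd_eq_add, add_smul, one_smul, add_comm]
      rw [e]; exact hmem
    set f : ℝ → affineSpan ℝ H := fun t => ⟨(1 + t) • h, memspan t⟩ with hfdef
    have hf : Continuous f := by
      apply Continuous.subtype_mk
      exact (continuous_const.add continuous_id).smul continuous_const
    have hf0 : f 0 = y := by
      apply Subtype.ext
      rw [hyx]
      show (1 + (0:ℝ)) • h = h
      simp
    have hopen : IsOpen (f ⁻¹' interior (((↑) : affineSpan ℝ H → EuclideanSpace ℝ (Fin d)) ⁻¹' H)) :=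
      isOpen_interior.preimage hf
    have h0mem : (0 : ℝ) ∈ f ⁻¹' interior (((↑) : affineSpan ℝ H → EuclideanSpace ℝ (Fin d)) ⁻¹' H) := by
      simp only [mem_preimage, hf0]; exact hyU
    obtain ⟨ε, hε, hball⟩ := Metric.isOpen_iff.mp hopen 0 h0mem
    set t : ℝ := ε / 2 with htdef
    have ht : 0 < t := by positivity
    have htmem : (1 + t) • h ∈ H := by
      have : t ∈ Metric.ball (0:ℝ) ε := by
        rw [Metric.mem_ball, Real.dist_eq, sub_zero, abs_of_pos ht]
        linarith
      have := interior_subset (hball this)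
      exact this
    have hpos : (0:ℝ) < t * x / (1 + t) := by positivity
    obtain ⟨q, hq0, hq1⟩ := exists_rat_btwn hpos
    refine mem_iUnion₂.mpr ⟨q, by exact_mod_cast hq0, ?_⟩
    intro P hP
    haveI := h𝒬prob P hP
    have hP1 := htmem P hP
    have hsub : {ω | 0 ≤ x + (inner ℝ ((1 + t) • h) (Y ω) : ℝ)}
        ⊆ {ω | (q : ℝ) ≤ x + (inner ℝ h (Y ω) : ℝ)} := by
      intro ω hω
      simp only [mem_setOf_eq, real_inner_smul_left] at hω ⊢
      have h1t : (0:ℝ) < 1 + t := by linarith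
      have hq1' : (q : ℝ) * (1 + t) < t * x := (lt_div_iff₀ h1t).mp hq1
      nlinarith [hω, hq1']
    have hmono := measure_mono (μ := P) hsub
    rw [hP1] at hmono
    exact le_antisymm prob_le_one hmono
  · intro hh
    obtain ⟨q, hq, hhq⟩ := mem_iUnion₂.mp hh
    have hq0 : (0:ℝ) < (q:ℝ) := by exact_mod_cast hq
    apply interior_subset_intrinsicInterior
    rw [mem_interior_iff_mem_nhds, Metric.mem_nhds_iff]
    refine ⟨(q:ℝ) / (2 * (K + 1)), by positivity, ?_⟩
    intro h' hh'
    rw [mem_ball, dist_eq_norm] at hh'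
    intro P hP
    haveI := h𝒬prob P hP
    have hP1 := hhq P hP
    have hsub : {ω | (q : ℝ) ≤ x + (inner ℝ h (Y ω) : ℝ)}
        ⊆ {ω | 0 ≤ x + (inner ℝ h' (Y ω) : ℝ)} := by
      intro ω hω
      simp only [mem_setOf_eq] at hω ⊢
      have hdiff : |(inner ℝ (h' - h) (Y ω) : ℝ)| ≤ ‖h' - h‖ * ‖Y ω‖ :=
        abs_real_inner_le_norm _ _
      have hb1 : ‖h' - h‖ * ‖Y ω‖ ≤ ((q:ℝ) / (2 * (K + 1))) * (K + 1) := by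
        apply mul_le_mul (le_of_lt hh') (le_trans (hYn ω) (by linarith)) (norm_nonneg _)
        positivity
      have hb2 : ((q:ℝ) / (2 * (K + 1))) * (K + 1) = (q:ℝ) / 2 := by
        field_simp
      have hinner : (inner ℝ (h' - h) (Y ω) : ℝ)
          = (inner ℝ h' (Y ω) : ℝ) - (inner ℝ h (Y ω) : ℝ) := inner_sub_left _ _ _
      rw [hinner] at hdiff
      have := abs_le.mp hdiff
      nlinarith [this.1, this.2]
    have hmono := measure_mono (μ := P) hsub
    rw [hP1] at hmono
    exact le_antisymm prob_le_one hmono
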